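/- Let X be a metric space and U any open cover of X. Then dim X = sup_{U ∈ U} dim U, where dim is the Lebesgue covering dimension. -/

import Mathlib

/-- `X` has covering dimension at most `n`: every open cover has an open refinement
in which every point lies in at most `n + 1` members. -/
def CoverDimLE (X : Type*) [TopologicalSpace X] (n : ℕ) : Prop :=
  ∀ 𝒰 : Set (Set X), (∀ U ∈ 𝒰, IsOpen U) → ⋃₀ 𝒰 = Set.univ →
    ∃ 𝒱 : Set (Set X), (∀ V ∈ 𝒱, IsOpen V) ∧ ⋃₀ 𝒱 = Set.univ ∧
      (∀ V ∈ 𝒱, ∃ U ∈ 𝒰, V ⊆ U) ∧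
      ∀ x : X, {V ∈ 𝒱 | x ∈ V}.encard ≤ (n + 1 : ℕ)

/-- The Lebesgue covering dimension, as an element of `ℕ∞` (`⊤` if no bound exists). -/
noncomputable def coverDim (X : Type*) [TopologicalSpace X] : ℕ∞ :=
  sInf {m : ℕ∞ | ∃ n : ℕ, (n : ℕ∞) = m ∧ CoverDimLE X n}

open Set Metric Topology

/-- Relative covering dimension of a subset `S` of `X`, phrased with open families of `X`. -/
def DimLE {X : Type*} [TopologicalSpace X] (S : Set X) (n : ℕ) : Prop :=
  ∀ 𝒰 : Set (Set X), (∀ U ∈ 𝒰, IsOpen U) → S ⊆ ⋃₀ 𝒰 →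
    ∃ 𝒱 : Set (Set X), (∀ V ∈ 𝒱, IsOpen V) ∧ S ⊆ ⋃₀ 𝒱 ∧
      (∀ V ∈ 𝒱, ∃ U ∈ 𝒰, V ⊆ U) ∧
      ∀ x ∈ S, {V ∈ 𝒱 | x ∈ V}.encard ≤ (n + 1 : ℕ)

section Basic

variable {X : Type*} [TopologicalSpace X]

theorem DimLE.mono {S : Set X} {n m : ℕ} (h : DimLE S n) (hnm : n ≤ m) : DimLE S m := by
  intro 𝒰 ho hc
  obtain ⟨𝒱, h1, h2, h3, h4⟩ := h 𝒰 ho hc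
  exact ⟨𝒱, h1, h2, h3, fun x hx => (h4 x hx).trans (by exact_mod_cast Nat.succ_le_succ hnm)⟩

theorem CoverDimLE.mono {n m : ℕ} (h : CoverDimLE X n) (hnm : n ≤ m) : CoverDimLE X m := by
  intro 𝒰 ho hc
  obtain ⟨𝒱, h1, h2, h3, h4⟩ := h 𝒰 ho hc
  exact ⟨𝒱, h1, h2, h3, fun x => (h4 x).trans (by exact_mod_cast Nat.succ_le_succ hnm)⟩

theorem coverDimLE_univ_iff {n : ℕ} : CoverDimLE X n ↔ DimLE (Set.univ : Set X) n := by
  constructor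
  · intro h 𝒰 ho hc
    obtain ⟨𝒱, h1, h2, h3, h4⟩ := h 𝒰 ho (univ_subset_iff.mp hc)
    exact ⟨𝒱, h1, h2.symm.subset, h3, fun x _ => h4 x⟩
  · intro h 𝒰 ho hc
    obtain ⟨𝒱, h1, h2, h3, h4⟩ := h 𝒰 ho hc.symm.subset
    exact ⟨𝒱, h1, univ_subset_iff.mp h2, h3, fun x => h4 x (mem_univ x)⟩

/-- Transfer between the subspace covering dimension and the relative one. -/
theorem coverDimLE_subtype_iff {S : Set X} {n : ℕ} :
    CoverDimLE S n ↔ DimLE S n := by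
  constructor
  · intro h 𝒰 ho hc
    -- pull the cover back to the subtype
    set 𝒰' : Set (Set S) := (fun U => ((↑) : S → X) ⁻¹' U) '' 𝒰 with h𝒰'
    have ho' : ∀ U' ∈ 𝒰', IsOpen U' := by
      rintro U' ⟨U, hU, rfl⟩
      exact (ho U hU).preimage continuous_subtype_val
    have hc' : ⋃₀ 𝒰' = Set.univ := by
      apply Set.eq_univ_of_forall
      rintro ⟨x, hx⟩
      obtain ⟨U, hU, hxU⟩ := hc hx
      exact ⟨_, ⟨U, hU, rfl⟩, hxU⟩
    obtain ⟨𝒱', h1, h2, h3, h4⟩ := h 𝒰' ho' hc'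
    have key : ∀ V' : Set S, ∃ O U : Set X, V' ∈ 𝒱' →
        IsOpen O ∧ ((↑) : S → X) ⁻¹' O = V' ∧ U ∈ 𝒰 ∧ V' ⊆ ((↑) : S → X) ⁻¹' U := by
      intro V'
      by_cases hV' : V' ∈ 𝒱'
      · obtain ⟨O, hO, hOV⟩ := isOpen_induced_iff.mp (h1 V' hV')
        obtain ⟨U', hU', hVU'⟩ := h3 V' hV'
        obtain ⟨U, hU, rfl⟩ := hU'
        exact ⟨O, U, fun _ => ⟨hO, hOV, hU, hVU'⟩⟩
      · exact ⟨∅, ∅, fun h => absurd h hV'⟩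
    choose O U hkey using key
    set f : Set S → Set X := fun V' => O V' ∩ U V' with hf
    refine ⟨f '' 𝒱', ?_, ?_, ?_, ?_⟩
    · rintro V ⟨V', hV', rfl⟩
      obtain ⟨hO, -, hU, -⟩ := hkey V' hV'
      exact hO.inter (ho _ hU)
    · intro x hx
      have : (⟨x, hx⟩ : S) ∈ ⋃₀ 𝒱' := h2 ▸ Set.mem_univ _
      obtain ⟨V', hV', hxV'⟩ := this
      obtain ⟨hO, hOV, hU, hVU⟩ := hkey V' hV'
      refine ⟨f V', ⟨V', hV', rfl⟩, ?_, ?_⟩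
      · rw [← hOV] at hxV'; exact hxV'
      · exact hVU hxV'
    · rintro V ⟨V', hV', rfl⟩
      obtain ⟨-, -, hU, -⟩ := hkey V' hV'
      exact ⟨U V', hU, Set.inter_subset_right⟩
    · intro x hx
      have hsub : {V ∈ f '' 𝒱' | x ∈ V} ⊆ f '' {V' ∈ 𝒱' | (⟨x, hx⟩ : S) ∈ V'} := by
        rintro V ⟨⟨V', hV', rfl⟩, hxV⟩
        obtain ⟨hO, hOV, hU, hVU⟩ := hkey V' hV'
        refine ⟨V', ⟨hV', ?_⟩, rfl⟩
        have : x ∈ O V' := hxV.1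
        rw [← hOV]; exact this
      calc {V ∈ f '' 𝒱' | x ∈ V}.encard ≤ (f '' {V' ∈ 𝒱' | (⟨x, hx⟩ : S) ∈ V'}).encard :=
            Set.encard_mono hsub
        _ ≤ {V' ∈ 𝒱' | (⟨x, hx⟩ : S) ∈ V'}.encard := Set.encard_image_le _ _
        _ ≤ (n + 1 : ℕ) := h4 _
  · intro h 𝒰' ho' hc'
    -- push the cover of the subtype forward
    have key : ∀ U' : Set S, ∃ O : Set X, U' ∈ 𝒰' →
        IsOpen O ∧ ((↑) : S → X) ⁻¹' O = U' := by
      intro U'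
      by_cases hU' : U' ∈ 𝒰'
      · obtain ⟨O, hO, hOU⟩ := isOpen_induced_iff.mp (ho' U' hU')
        exact ⟨O, fun _ => ⟨hO, hOU⟩⟩
      · exact ⟨∅, fun h => absurd h hU'⟩
    choose O hO using key
    set 𝒰 : Set (Set X) := O '' 𝒰' with h𝒰
    have ho2 : ∀ A ∈ 𝒰, IsOpen A := by
      rintro A ⟨U', hU', rfl⟩; exact (hO U' hU').1
    have hc2 : S ⊆ ⋃₀ 𝒰 := by
      intro x hx
      have : (⟨x, hx⟩ : S) ∈ ⋃₀ 𝒰' := hc' ▸ Set.mem_univ _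
      obtain ⟨U', hU', hxU'⟩ := this
      refine ⟨O U', ⟨U', hU', rfl⟩, ?_⟩
      have := (hO U' hU').2
      rw [← this] at hxU'; exact hxU'
    obtain ⟨𝒱, h1, h2, h3, h4⟩ := h 𝒰 ho2 hc2
    have key2 : ∀ V : Set X, ∃ U' : Set S, V ∈ 𝒱 → U' ∈ 𝒰' ∧ V ⊆ O U' := by
      intro V
      by_cases hV : V ∈ 𝒱
      · obtain ⟨A, hA, hVA⟩ := h3 V hV
        obtain ⟨U', hU', rfl⟩ := hA
        exact ⟨U', fun _ => ⟨hU', hVA⟩⟩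
      · exact ⟨∅, fun h => absurd h hV⟩
    choose g hg using key2
    set f : Set X → Set S := fun V => ((↑) : S → X) ⁻¹' V with hf
    refine ⟨f '' 𝒱, ?_, ?_, ?_, ?_⟩
    · rintro V' ⟨V, hV, rfl⟩
      exact (h1 V hV).preimage continuous_subtype_val
    · apply Set.eq_univ_of_forall
      rintro ⟨x, hx⟩
      obtain ⟨V, hV, hxV⟩ := h2 hx
      exact ⟨f V, ⟨V, hV, rfl⟩, hxV⟩
    · rintro V' ⟨V, hV, rfl⟩
      obtain ⟨hU', hVO⟩ := hg V hV
      refine ⟨g V, hU', ?_⟩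
      intro z hz
      have : (z : X) ∈ O (g V) := hVO hz
      rw [← (hO (g V) hU').2]; exact this
    · rintro ⟨x, hx⟩
      have hsub : {V' ∈ f '' 𝒱 | (⟨x, hx⟩ : S) ∈ V'} ⊆ f '' {V ∈ 𝒱 | x ∈ V} := by
        rintro V' ⟨⟨V, hV, rfl⟩, hxV⟩
        exact ⟨V, ⟨hV, hxV⟩, rfl⟩
      calc {V' ∈ f '' 𝒱 | (⟨x, hx⟩ : S) ∈ V'}.encard
          ≤ (f '' {V ∈ 𝒱 | x ∈ V}).encard := Set.encard_mono hsub
        _ ≤ {V ∈ 𝒱 | x ∈ V}.encard := Set.encard_image_le _ _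
        _ ≤ (n + 1 : ℕ) := h4 x hx

/-- Monotonicity under closed subsets. -/
theorem DimLE.closed_subset {S C : Set X} {n : ℕ} (h : DimLE S n) (hCS : C ⊆ S)
    (hC : IsClosed C) : DimLE C n := by
  intro 𝒰 ho hc
  obtain ⟨𝒱, h1, h2, h3, h4⟩ := h (insert Cᶜ 𝒰) (by
      rintro U (rfl | hU)
      · exact hC.isOpen_compl
      · exact ho U hU)
    (by
      intro x hx
      by_cases hxC : x ∈ C
      · obtain ⟨U, hU, hxU⟩ := hc hxC
        exact ⟨U, Set.mem_insert_of_mem _ hU, hxU⟩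
      · exact ⟨Cᶜ, Set.mem_insert _ _, hxC⟩)
  refine ⟨{V ∈ 𝒱 | ¬ V ⊆ Cᶜ}, fun V hV => h1 V hV.1, ?_, ?_, ?_⟩
  · intro x hx
    obtain ⟨V, hV, hxV⟩ := h2 (hCS hx)
    exact ⟨V, ⟨hV, fun hsub => (hsub hxV) hx⟩, hxV⟩
  · rintro V ⟨hV, hnsub⟩
    obtain ⟨U, hU, hVU⟩ := h3 V hV
    rcases hU with rfl | hU
    · exact absurd hVU hnsub
    · exact ⟨U, hU, hVU⟩
  · intro x hx
    exact le_trans (Set.encard_mono (by rintro V ⟨⟨hV, -⟩, hxV⟩; exact ⟨hV, hxV⟩))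
      (h4 x (hCS hx))

/-- Sum theorem for a family separated by disjoint-from-each-other open envelopes. -/
theorem DimLE.iUnion_separated {J : Type*} {S O : J → Set X} {n : ℕ}
    (hO : ∀ j, IsOpen (O j)) (hSO : ∀ j, S j ⊆ O j)
    (hsep : ∀ i j, i ≠ j → S i ∩ O j = ∅) (h : ∀ j, DimLE (S j) n) :
    DimLE (⋃ j, S j) n := by
  intro 𝒰 ho hc
  have hj : ∀ j : J, ∃ 𝒱j : Set (Set X), (∀ V ∈ 𝒱j, IsOpen V) ∧ S j ⊆ ⋃₀ 𝒱j ∧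
      (∀ V ∈ 𝒱j, ∃ U ∈ 𝒰, V ⊆ U ∩ O j) ∧
      ∀ x ∈ S j, {V ∈ 𝒱j | x ∈ V}.encard ≤ (n + 1 : ℕ) := by
    intro j
    obtain ⟨𝒱j, h1, h2, h3, h4⟩ := h j ((fun U => U ∩ O j) '' 𝒰)
      (by rintro V ⟨U, hU, rfl⟩; exact (ho U hU).inter (hO j))
      (by
        intro x hx
        obtain ⟨U, hU, hxU⟩ := hc (Set.mem_iUnion.mpr ⟨j, hx⟩)
        exact ⟨U ∩ O j, ⟨U, hU, rfl⟩, hxU, hSO j hx⟩)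
    refine ⟨𝒱j, h1, h2, ?_, h4⟩
    rintro V hV
    obtain ⟨W, ⟨U, hU, rfl⟩, hVW⟩ := h3 V hV
    exact ⟨U, hU, hVW⟩
  choose 𝒱 h1 h2 h3 h4 using hj
  refine ⟨⋃ j, 𝒱 j, ?_, ?_, ?_, ?_⟩
  · rintro V hV
    obtain ⟨j, hVj⟩ := Set.mem_iUnion.mp hV
    exact h1 j V hVj
  · intro x hx
    obtain ⟨j, hxj⟩ := Set.mem_iUnion.mp hx
    obtain ⟨V, hV, hxV⟩ := h2 j hxj
    exact ⟨V, Set.mem_iUnion.mpr ⟨j, hV⟩, hxV⟩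
  · intro V hV
    obtain ⟨j, hVj⟩ := Set.mem_iUnion.mp hV
    obtain ⟨U, hU, hVU⟩ := h3 j V hVj
    exact ⟨U, hU, hVU.trans Set.inter_subset_left⟩
  · intro x hx
    obtain ⟨i, hxi⟩ := Set.mem_iUnion.mp hx
    refine le_trans (Set.encard_mono ?_) (h4 i x hxi)
    rintro V ⟨hV, hxV⟩
    obtain ⟨j, hVj⟩ := Set.mem_iUnion.mp hV
    have hij : j = i := by
      by_contra hne
      obtain ⟨U, hU, hVU⟩ := h3 j V hVj
      have hxOj : x ∈ O j := (hVU hxV).2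
      have hemp := hsep i j (Ne.symm hne)
      have : x ∈ S i ∩ O j := ⟨hxi, hxOj⟩
      rw [hemp] at this
      exact this
    exact ⟨hij ▸ hVj, hxV⟩

end Basic

section Metric

variable {X : Type*} [MetricSpace X]

/-- Stone: every open family has a σ-discrete open refinement with the same union. -/
theorem stone_refinement (𝒰 : Set (Set X)) (ho : ∀ U ∈ 𝒰, IsOpen U) :
    ∃ 𝒱 : ℕ → Set (Set X),
      (∀ k, ∀ V ∈ 𝒱 k, IsOpen V) ∧
      (⋃₀ 𝒰 ⊆ ⋃ k, ⋃₀ (𝒱 k)) ∧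
      (∀ k, ∀ V ∈ 𝒱 k, ∃ U ∈ 𝒰, V ⊆ U) ∧
      (∀ k, ∃ ε : ℝ, 0 < ε ∧ ∀ V ∈ 𝒱 k, ∀ V' ∈ 𝒱 k, V ≠ V' →
        ∀ p ∈ V, ∀ q ∈ V', ε ≤ dist p q) := by
  classical
  set I := {U // U ∈ 𝒰} with hI
  set r : I → I → Prop := WellOrderingRel with hr
  have wf : WellFounded r := (IsWellFounded.wf : WellFounded (WellOrderingRel (α := I)))
  -- centers
  set Z : ℕ → I → Set X := fun k i =>
    {x | x ∈ i.1 ∧ (∀ j : I, r j i → x ∉ j.1) ∧ ball x ((1/2) ^ k) ⊆ i.1 ∧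
      ∀ m < k, ¬ ball x ((1/2) ^ m) ⊆ i.1} with hZ
  set D : ℕ → I → Set X := fun k i => ⋃ x ∈ Z k i, ball x ((1/2) ^ (k + 2)) with hD
  refine ⟨fun k => Set.range (D k), ?_, ?_, ?_, ?_⟩
  · rintro k V ⟨i, rfl⟩
    exact isOpen_biUnion fun x _ => isOpen_ball
  · rintro x ⟨U, hU, hxU⟩
    have hne : {i : I | x ∈ i.1}.Nonempty := ⟨⟨U, hU⟩, hxU⟩
    set i0 : I := wf.min _ hne with hi0
    have hxi0 : x ∈ i0.1 := wf.min_mem _ hne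
    have hex : ∃ k : ℕ, ball x ((1/2) ^ k) ⊆ i0.1 := by
      obtain ⟨ε, hε, hball⟩ := Metric.isOpen_iff.mp (ho i0.1 i0.2) x hxi0
      obtain ⟨k, hk⟩ := exists_pow_lt_of_lt_one hε (by norm_num : (1/2 : ℝ) < 1)
      exact ⟨k, le_trans (Metric.ball_subset_ball hk.le) hball⟩
    set k0 := Nat.find hex with hk0
    have hxZ : x ∈ Z k0 i0 := by
      refine ⟨hxi0, ?_, Nat.find_spec hex, fun m hm => Nat.find_min hex hm⟩
      intro j hj hxj
      exact wf.not_lt_min _ hxj hj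
    refine Set.mem_iUnion.mpr ⟨k0, ⟨D k0 i0, ⟨i0, rfl⟩, ?_⟩⟩
    exact Set.mem_biUnion hxZ (mem_ball_self (by positivity))
  · rintro k V ⟨i, rfl⟩
    refine ⟨i.1, i.2, ?_⟩
    rintro p hp
    obtain ⟨x, hx, hpx⟩ := Set.mem_iUnion₂.mp hp
    exact hx.2.2.1 (Metric.ball_subset_ball (by
      apply pow_le_pow_of_le_one (by norm_num) (by norm_num)
      omega) hpx)
  · intro k
    refine ⟨(1/2) ^ (k + 1), by positivity, ?_⟩
    rintro V ⟨i, rfl⟩ V' ⟨j, rfl⟩ hne p hp q hq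
    have hij : i ≠ j := fun h => hne (by rw [h])
    obtain ⟨x, hx, hpx⟩ := Set.mem_iUnion₂.mp hp
    obtain ⟨y, hy, hqy⟩ := Set.mem_iUnion₂.mp hq
    have key : (1/2) ^ k ≤ dist x y := by
      rcases trichotomous_of r i j with hrij | heq | hrji
      · -- i < j : y avoids i, ball x ⊆ i
        have hyi : y ∉ i.1 := hy.2.1 i hrij
        by_contra hlt
        exact hyi (hx.2.2.1 (by simpa [Metric.mem_ball, dist_comm] using lt_of_not_ge hlt))
      · exact absurd heq hij
      · have hxj : x ∉ j.1 := hx.2.1 j hrji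
        by_contra hlt
        exact hxj (hy.2.2.1 (by simpa [Metric.mem_ball] using lt_of_not_ge hlt))
    have hp' : dist x p < (1/2) ^ (k + 2) := by
      simpa [Metric.mem_ball, dist_comm] using hpx
    have hq' : dist y q < (1/2) ^ (k + 2) := by
      simpa [Metric.mem_ball, dist_comm] using hqy
    have htri : dist x y ≤ dist x p + dist p q + dist q y := dist_triangle4 x p q y
    have e1 : ((1:ℝ)/2) ^ (k+1) = (1/2)^k * (1/2) := pow_succ _ _
    have e2 : ((1:ℝ)/2) ^ (k+2) = (1/2)^k * (1/4) := by ring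
    have hqy' : dist q y < (1/2) ^ (k+2) := by rwa [dist_comm] at hq'
    nlinarith [pow_pos (by norm_num : (0:ℝ) < 1/2) k]

/-- A locally finite open refinement (of an arbitrary open family), covering its union. -/
theorem locallyFinite_refinement_rel (𝒰 : Set (Set X)) (ho : ∀ U ∈ 𝒰, IsOpen U) :
    ∃ P : Set X → Set X,
      (∀ j, IsOpen (P j)) ∧ (∀ j, (P j).Nonempty → ∃ U ∈ 𝒰, P j ⊆ U) ∧
      (⋃₀ 𝒰 ⊆ ⋃ j, P j) ∧
      (∀ x ∈ ⋃₀ 𝒰, ∃ N ∈ 𝓝 x, {j | (P j ∩ N).Nonempty}.Finite) := by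
  classical
  set Y := ⋃₀ 𝒰 with hY
  have hYo : IsOpen Y := isOpen_sUnion ho
  set u : {U // U ∈ 𝒰} → Set Y := fun i => ((↑) : Y → X) ⁻¹' i.1 with hu
  have uo : ∀ i, IsOpen (u i) := fun i => (ho i.1 i.2).preimage continuous_subtype_val
  have uc : ⋃ i, u i = Set.univ := by
    apply Set.eq_univ_of_forall
    rintro ⟨y, hy⟩
    obtain ⟨U, hU, hyU⟩ := hy
    exact Set.mem_iUnion.mpr ⟨⟨U, hU⟩, hyU⟩
  obtain ⟨v, hvo, hvc, hvlf, hvu⟩ := precise_refinement u uo uc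
  set P : Set X → Set X := fun W => if h : W ∈ 𝒰 then ((↑) : Y → X) '' v ⟨W, h⟩ else ∅
    with hP
  have hPo : ∀ j, IsOpen (P j) := by
    intro j
    by_cases h : j ∈ 𝒰
    · simp only [hP, dif_pos h]
      exact hYo.isOpenMap_subtype_val _ (hvo _)
    · simp only [hP, dif_neg h]; exact isOpen_empty
  refine ⟨P, hPo, ?_, ?_, ?_⟩
  · intro j hj
    by_cases h : j ∈ 𝒰
    · refine ⟨j, h, ?_⟩
      simp only [hP, dif_pos h]
      rintro x ⟨z, hz, rfl⟩
      exact hvu ⟨j, h⟩ hz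
    · simp only [hP, dif_neg h] at hj
      exact absurd hj (by simp)
  · intro x hx
    have : (⟨x, hx⟩ : Y) ∈ ⋃ i, v i := hvc ▸ Set.mem_univ _
    obtain ⟨i, hi⟩ := Set.mem_iUnion.mp this
    refine Set.mem_iUnion.mpr ⟨i.1, ?_⟩
    simp only [hP, dif_pos i.2]
    exact ⟨⟨x, hx⟩, by simpa using hi, rfl⟩
  · intro x hx
    obtain ⟨t, ht, htf⟩ := hvlf ⟨x, hx⟩
    rw [nhds_subtype_eq_comap] at ht
    obtain ⟨N, hN, hNt⟩ := Filter.mem_comap.mp ht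
    refine ⟨N, hN, (htf.image (fun i => i.1)).subset ?_⟩
    rintro j ⟨y, hyP, hyN⟩
    by_cases h : j ∈ 𝒰
    · simp only [hP, dif_pos h] at hyP
      obtain ⟨z, hz, rfl⟩ := hyP
      exact ⟨⟨j, h⟩, ⟨z, hz, hNt hyN⟩, rfl⟩
    · simp only [hP, dif_neg h] at hyP
      exact absurd hyP (Set.notMem_empty _)

/-- A locally finite open refinement with closure-multiplicity control on `F`. -/
theorem lf_refinement_of_dimLE {F : Set X} {n : ℕ} (hF : DimLE F n)
    (𝒜 : Set (Set X)) (ho : ∀ A ∈ 𝒜, IsOpen A) (hc : F ⊆ ⋃₀ 𝒜) :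
    ∃ P : Set X → Set X,
      (∀ j, IsOpen (P j)) ∧ (∀ j, (P j).Nonempty → ∃ A ∈ 𝒜, P j ⊆ A) ∧ (F ⊆ ⋃ j, P j) ∧
      (∀ x ∈ ⋃ j, P j, ∃ N ∈ 𝓝 x, {j | (P j ∩ N).Nonempty}.Finite) ∧
      (∀ x ∈ F, {j | x ∈ closure (P j)}.encard ≤ (n + 1 : ℕ)) := by
  classical
  obtain ⟨𝒲, h1, h2, h3, h4⟩ := hF 𝒜 ho hc
  set Y := ⋃₀ 𝒲 with hYdef
  have hYo : IsOpen Y := isOpen_sUnion h1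
  set u : {W // W ∈ 𝒲} → Set Y := fun i => ((↑) : Y → X) ⁻¹' i.1 with hu
  have uo : ∀ i, IsOpen (u i) := fun i => (h1 i.1 i.2).preimage continuous_subtype_val
  have uc : ⋃ i, u i = Set.univ := by
    apply Set.eq_univ_of_forall
    rintro ⟨y, hy⟩
    obtain ⟨W, hW, hyW⟩ := hy
    exact Set.mem_iUnion.mpr ⟨⟨W, hW⟩, hyW⟩
  obtain ⟨v, hvo, hvc, hvlf, hvu⟩ := precise_refinement u uo uc
  obtain ⟨w, hwc, hwo, hwcl⟩ := exists_iUnion_eq_closure_subset hvo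
    (fun y => hvlf.point_finite y) hvc
  set P : Set X → Set X := fun W => if h : W ∈ 𝒲 then ((↑) : Y → X) '' w ⟨W, h⟩ else ∅
    with hP
  have hwv : ∀ i, w i ⊆ v i := fun i => subset_closure.trans (hwcl i)
  have hPsub : ∀ (W) (h : W ∈ 𝒲), P W ⊆ W := by
    intro W h
    simp only [hP, dif_pos h]
    rintro x ⟨z, hz, rfl⟩
    exact hvu ⟨W, h⟩ (hwv _ hz)
  refine ⟨P, ?_, ?_, ?_, ?_, ?_⟩
  · intro j
    by_cases h : j ∈ 𝒲
    · simp only [hP, dif_pos h]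
      exact hYo.isOpenMap_subtype_val _ (hwo _)
    · simp only [hP, dif_neg h]; exact isOpen_empty
  · intro j hj
    by_cases h : j ∈ 𝒲
    · obtain ⟨A, hA, hjA⟩ := h3 j h
      exact ⟨A, hA, (hPsub j h).trans hjA⟩
    · simp only [hP, dif_neg h] at hj
      exact absurd hj (by simp)
  · intro x hx
    have hxY : x ∈ Y := h2 hx
    have : (⟨x, hxY⟩ : Y) ∈ ⋃ i, w i := hwc ▸ Set.mem_univ _
    obtain ⟨i, hi⟩ := Set.mem_iUnion.mp this
    refine Set.mem_iUnion.mpr ⟨i.1, ?_⟩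
    simp only [hP, dif_pos i.2]
    exact ⟨⟨x, hxY⟩, by simpa using hi, rfl⟩
  · intro x hx
    have hxY : x ∈ Y := by
      obtain ⟨j, hj⟩ := Set.mem_iUnion.mp hx
      by_cases h : j ∈ 𝒲
      · exact (hPsub j h).trans (fun y hy => (⟨j, h, hy⟩ : y ∈ Y)) hj
      · simp only [hP, dif_neg h] at hj; exact absurd hj (Set.notMem_empty _)
    obtain ⟨t, ht, htf⟩ := hvlf ⟨x, hxY⟩
    rw [nhds_subtype_eq_comap] at ht
    obtain ⟨N, hN, hNt⟩ := Filter.mem_comap.mp ht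
    refine ⟨N, hN, (htf.image (fun i => i.1)).subset ?_⟩
    rintro j ⟨y, hyP, hyN⟩
    by_cases h : j ∈ 𝒲
    · simp only [hP, dif_pos h] at hyP
      obtain ⟨z, hz, rfl⟩ := hyP
      exact ⟨⟨j, h⟩, ⟨z, hwv _ hz, hNt hyN⟩, rfl⟩
    · simp only [hP, dif_neg h] at hyP
      exact absurd hyP (Set.notMem_empty _)
  · intro x hxF
    have hxY : x ∈ Y := h2 hxF
    refine le_trans (Set.encard_mono ?_) (h4 x hxF)
    intro j hj
    simp only [Set.mem_setOf_eq] at hj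
    by_cases h : j ∈ 𝒲
    · refine ⟨h, ?_⟩
      have hcl : (⟨x, hxY⟩ : Y) ∈ closure (w ⟨j, h⟩) := by
        have := (Topology.IsEmbedding.subtypeVal (p := fun x => x ∈ Y)).closure_eq_preimage_closure_image
          (w ⟨j, h⟩)
        rw [this]
        simp only [Set.mem_preimage]
        simpa [hP, dif_pos h] using hj
      have : (⟨x, hxY⟩ : Y) ∈ u ⟨j, h⟩ := hvu _ (hwcl _ hcl)
      exact this
    · simp only [hP, dif_neg h, closure_empty] at hj
      exact absurd hj (Set.notMem_empty _)

/-- Shrinking step: fix the closure-multiplicity over a closed set `F`. -/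
theorem shrink_step {F S : Set X} {n : ℕ} (hFc : IsClosed F) (hF : DimLE F n)
    (hFS : F ⊆ S) {ι : Type _} (A : ι → Set X) :
    ∃ B : ι → Set X, (∀ i, B i ⊆ A i) ∧
      ((∀ i, IsOpen (A i)) → S ⊆ (⋃ i, A i) →
        (∀ i, IsOpen (B i)) ∧ S ⊆ (⋃ i, B i) ∧
        ∀ x ∈ F, {i | x ∈ closure (B i)}.encard ≤ (n + 1 : ℕ)) := by
  classical
  by_cases hyp : (∀ i, IsOpen (A i)) ∧ S ⊆ ⋃ i, A i
  swap
  · exact ⟨A, fun i => subset_rfl, fun h1 h2 => absurd ⟨h1, h2⟩ hyp⟩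
  obtain ⟨hAo, hAS⟩ := hyp
  rcases isEmpty_or_nonempty ι with hι | hι
  · refine ⟨A, fun i => subset_rfl, fun _ _ => ⟨hAo, hAS, ?_⟩⟩
    intro x hx
    have : x ∈ ⋃ i, A i := hAS (hFS hx)
    rw [Set.iUnion_of_empty] at this
    exact absurd this (Set.notMem_empty _)
  obtain ⟨P, hPo, hPsub, hPF, hPlf, hPcl⟩ := lf_refinement_of_dimLE hF (Set.range A)
    (by rintro _ ⟨i, rfl⟩; exact hAo i)
    (by
      intro x hx
      obtain ⟨i, hi⟩ := Set.mem_iUnion.mp (hAS (hFS hx))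
      exact ⟨A i, ⟨i, rfl⟩, hi⟩)
  have hg : ∀ j : Set X, ∃ i : ι, (P j).Nonempty → P j ⊆ A i := by
    intro j
    by_cases h : (P j).Nonempty
    · obtain ⟨A', ⟨i, rfl⟩, hsub⟩ := hPsub j h
      exact ⟨i, fun _ => hsub⟩
    · exact ⟨Classical.arbitrary ι, fun h' => absurd h' h⟩
  choose g hgP using hg
  set E := ⋃ j, P j with hE
  have hEo : IsOpen E := isOpen_iUnion hPo
  obtain ⟨Ω, hΩo, hFΩ, hΩcl⟩ := normal_exists_closure_subset hFc hEo hPF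
  set B : ι → Set X := fun i =>
    (A i \ closure Ω) ∪ ⋃ j ∈ {j | (P j).Nonempty ∧ g j = i}, P j with hB
  have hBsub : ∀ i, B i ⊆ A i := by
    intro i
    apply Set.union_subset Set.diff_subset
    refine Set.iUnion₂_subset ?_
    rintro j ⟨hjne, rfl⟩
    exact hgP j hjne
  refine ⟨B, hBsub, fun _ _ => ⟨?_, ?_, ?_⟩⟩
  · intro i
    exact ((hAo i).sdiff isClosed_closure).union
      (isOpen_biUnion fun j _ => hPo j)
  · intro x hx
    obtain ⟨i, hi⟩ := Set.mem_iUnion.mp (hAS hx)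
    by_cases hxΩ : x ∈ closure Ω
    · obtain ⟨j, hj⟩ := Set.mem_iUnion.mp (hΩcl hxΩ)
      refine Set.mem_iUnion.mpr ⟨g j, Set.mem_union_right _ ?_⟩
      exact Set.mem_biUnion ⟨⟨x, hj⟩, rfl⟩ hj
    · exact Set.mem_iUnion.mpr ⟨i, Set.mem_union_left _ ⟨hi, hxΩ⟩⟩
  · intro x hxF
    have hxΩ : x ∈ Ω := hFΩ hxF
    have hxE : x ∈ E := hPF hxF
    obtain ⟨N, hN, hNf⟩ := hPlf x hxE
    have key : {i | x ∈ closure (B i)} ⊆ g '' {j | x ∈ closure (P j)} := by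
      intro i hi
      simp only [Set.mem_setOf_eq, hB, closure_union] at hi
      rcases hi with hi | hi
      · exfalso
        have h1 : closure (A i \ closure Ω) ⊆ Ωᶜ := by
          apply closure_minimal _ (isClosed_compl_iff.mpr hΩo)
          intro y hy
          exact fun hyΩ => hy.2 (subset_closure hyΩ)
        exact (h1 hi) hxΩ
      · -- x lies in the closure of the union of the fiber; localize
        have hxcl : x ∈ closure (⋃ j ∈ {j | ((P j).Nonempty ∧ g j = i) ∧
            (P j ∩ N).Nonempty}, P j) := by
          rw [_root_.mem_closure_iff] at hi ⊢
          intro O hOo hxO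
          obtain ⟨y, hyO, hyP⟩ := hi (O ∩ interior N) (hOo.inter isOpen_interior)
            ⟨hxO, mem_interior_iff_mem_nhds.mpr hN⟩
          obtain ⟨j, hjmem, hyPj⟩ := Set.mem_iUnion₂.mp hyP
          refine ⟨y, hyO.1, Set.mem_biUnion ⟨hjmem, ⟨y, hyPj, interior_subset hyO.2⟩⟩ hyPj⟩
        have hfin : {j | ((P j).Nonempty ∧ g j = i) ∧ (P j ∩ N).Nonempty}.Finite :=
          hNf.subset fun j hj => hj.2
        rw [hfin.closure_biUnion] at hxcl
        obtain ⟨j, hjmem, hjcl⟩ := Set.mem_iUnion₂.mp hxcl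
        exact ⟨j, hjcl, hjmem.1.2⟩
    calc {i | x ∈ closure (B i)}.encard ≤ (g '' {j | x ∈ closure (P j)}).encard :=
          Set.encard_mono key
      _ ≤ {j | x ∈ closure (P j)}.encard := Set.encard_image_le _ _
      _ ≤ (n + 1 : ℕ) := hPcl x hxF

set_option maxHeartbeats 1000000 in
/-- Countable closed sum theorem. -/
theorem dimLE_iUnion_closed {n : ℕ} (T : ℕ → Set X) (hTc : ∀ k, IsClosed (T k))
    (hT : ∀ k, DimLE (T k) n) : DimLE (⋃ k, T k) n := by
  classical
  intro 𝒰 ho hc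
  set S := ⋃ k, T k with hSdef
  have hTS : ∀ k, T k ⊆ S := fun k => Set.subset_iUnion T k
  obtain ⟨W, hWo, hWsub, hWc, hWlf⟩ := locallyFinite_refinement_rel 𝒰 ho
  -- iterate the shrink step along the T k
  set seq : ℕ → Set X → Set X :=
    fun k => Nat.rec W
      (fun k A => Classical.choose (shrink_step (hTc k) (hT k) (hTS k) A)) k with hseqdef
  have hseqS : ∀ k, seq (k + 1) =
      Classical.choose (shrink_step (hTc k) (hT k) (hTS k) (seq k)) := fun k => rfl
  have hspec : ∀ k, (∀ i, seq (k + 1) i ⊆ seq k i) ∧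
      ((∀ i, IsOpen (seq k i)) → S ⊆ (⋃ i, seq k i) →
        (∀ i, IsOpen (seq (k + 1) i)) ∧ S ⊆ (⋃ i, seq (k + 1) i) ∧
        ∀ x ∈ T k, {i | x ∈ closure (seq (k + 1) i)}.encard ≤ (n + 1 : ℕ)) := by
    intro k
    rw [hseqS k]
    exact Classical.choose_spec (shrink_step (hTc k) (hT k) (hTS k) (seq k))
  have hInv : ∀ k, (∀ i, IsOpen (seq k i)) ∧ S ⊆ ⋃ i, seq k i := by
    intro k
    induction k with
    | zero => exact ⟨hWo, fun x hx => hWc (hc hx)⟩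
    | succ k ih =>
      obtain ⟨h1, h2, -⟩ := (hspec k).2 ih.1 ih.2
      exact ⟨h1, h2⟩
  have hdec : ∀ k i, seq (k + 1) i ⊆ seq k i := fun k => (hspec k).1
  have hchain : ∀ m k, m ≤ k → ∀ i, seq k i ⊆ seq m i := by
    intro m k
    induction k with
    | zero =>
      intro hmk i
      have hm0 : m = 0 := Nat.le_zero.mp hmk
      subst hm0; exact subset_rfl
    | succ k ih =>
      intro hmk i
      rcases Nat.lt_or_ge m (k + 1) with h | h
      · exact (hdec k i).trans (ih (by omega) i)
      · have : m = k + 1 := by omega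
        subst this; exact subset_rfl
  have hchain0 : ∀ m k, m ≤ k → ∀ i, seq k i ⊆ seq m i := hchain
  have hseqW : ∀ k i, seq k i ⊆ W i := fun k i => hchain 0 k (Nat.zero_le _) i
  have hord : ∀ k, ∀ x ∈ T k,
      {i | x ∈ closure (seq (k + 1) i)}.encard ≤ (n + 1 : ℕ) :=
    fun k => ((hspec k).2 (hInv k).1 (hInv k).2).2.2
  set C : Set X → Set X := fun i => ⋂ k, seq k i with hCdef
  have hCW : ∀ i, C i ⊆ W i := fun i => (Set.iInter_subset (fun k => seq k i) 0)
  have hCseq : ∀ k i, C i ⊆ seq k i := fun k i => Set.iInter_subset _ k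
  -- the C i cover S
  have hSx : ∀ x ∈ S, {j | x ∈ W j}.Finite := by
    intro x hx
    obtain ⟨N, hN, hNf⟩ := hWlf x (hc hx)
    exact hNf.subset fun j hj => ⟨x, hj, mem_of_mem_nhds hN⟩
  have hcov : ∀ x ∈ S, ∃ i, x ∈ C i := by
    intro x hx
    have hφ : ∀ k, ∃ i, x ∈ seq k i := fun k => Set.mem_iUnion.mp ((hInv k).2 hx)
    choose φ hφx using hφ
    have hφW : ∀ k, φ k ∈ {j | x ∈ W j} := fun k => hseqW k (φ k) (hφx k)
    have : ∃ i ∈ {j | x ∈ W j}, {k | φ k = i}.Infinite := by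
      by_contra hcon
      push_neg at hcon
      have hfin : (⋃ i ∈ {j | x ∈ W j}, {k | φ k = i}).Finite :=
        Set.Finite.biUnion (hSx x hx) fun i hi => hcon i hi
      have huniv : (Set.univ : Set ℕ) ⊆ ⋃ i ∈ {j | x ∈ W j}, {k | φ k = i} :=
        fun k _ => Set.mem_biUnion (hφW k) rfl
      exact Set.infinite_univ (hfin.subset huniv)
    obtain ⟨i, -, hinf⟩ := this
    refine ⟨i, Set.mem_iInter.mpr fun m => ?_⟩
    obtain ⟨k, hk, hmk⟩ := hinf.exists_gt m
    exact hchain m k hmk.le i (hk ▸ hφx k)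
  -- closure multiplicity of the C i on S
  have hclC : ∀ x ∈ S, {i | x ∈ closure (C i)}.encard ≤ (n + 1 : ℕ) := by
    intro x hx
    obtain ⟨k, hk⟩ := Set.mem_iUnion.mp hx
    refine le_trans (Set.encard_mono ?_) (hord k x hk)
    intro i hi
    exact closure_mono (hCseq (k + 1) i) hi
  clear_value C
  clear hspec hInv hdec hchain hchain0 hseqW hord hCseq hseqS hseqdef hCdef
  clear_value seq
  clear seq
  set J := {i | (C i).Nonempty} with hJdef
  -- the swelling construction
  set 𝒯 : Set (Finset (Set X)) :=
    {t | t.card = n + 2 ∧ ∀ i ∈ t, (C i).Nonempty} with h𝒯def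
  rcases Set.eq_empty_or_nonempty 𝒯 with h𝒯 | h𝒯
  · -- degenerate case: fewer than n+2 nonempty pieces
    have hJcard : J.encard ≤ (n + 1 : ℕ) := by
      by_contra hcon
      push_neg at hcon
      have : (↑(n + 2) : ℕ∞) ≤ J.encard := Order.add_one_le_of_lt (by exact_mod_cast hcon)
      obtain ⟨t', ht'J, ht'card⟩ := Set.exists_subset_encard_eq this
      have ht'fin : t'.Finite := Set.finite_of_encard_eq_coe ht'card
      have : ht'fin.toFinset ∈ 𝒯 := by
        constructor
        · have := ht'fin.encard_eq_coe_toFinset_card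
          rw [ht'card] at this
          exact_mod_cast this.symm
        · intro i hi
          exact ht'J (ht'fin.mem_toFinset.mp hi)
      rw [h𝒯] at this
      exact this
    refine ⟨W '' J, ?_, ?_, ?_, ?_⟩
    · rintro V ⟨i, hi, rfl⟩; exact hWo i
    · intro x hx
      obtain ⟨i, hi⟩ := hcov x hx
      exact ⟨W i, ⟨i, ⟨x, hi⟩, rfl⟩, hCW i hi⟩
    · rintro V ⟨i, hi, rfl⟩
      exact hWsub i (hi.mono (hCW i))
    · intro x hx
      calc {V ∈ W '' J | x ∈ V}.encard ≤ (W '' J).encard :=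
            Set.encard_mono fun V hV => hV.1
        _ ≤ J.encard := Set.encard_image_le _ _
        _ ≤ (n + 1 : ℕ) := hJcard
  -- main case
  haveI hne𝒯' : Nonempty ↥𝒯 := h𝒯.to_subtype
  have hne𝒯 : ∀ t : 𝒯, (t : Finset (Set X)).Nonempty := by
    rintro ⟨t, htcard, -⟩
    exact Finset.card_pos.mp (by rw [htcard]; omega)
  set f : 𝒯 → X → ℝ := fun t x => (t : Finset (Set X)).sup' (hne𝒯 t)
    (fun i => Metric.infDist x (C i)) with hfdef
  have hf0 : ∀ t x, 0 ≤ f t x := by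
    intro t x
    obtain ⟨i, hi⟩ := hne𝒯 t
    exact le_trans (Metric.infDist_nonneg (s := C i) (x := x))
      (Finset.le_sup' (fun i => Metric.infDist x (C i)) hi)
  set m : X → ℝ := fun x => ⨅ t : 𝒯, f t x with hmdef
  have hbdd : ∀ x, BddBelow (Set.range fun t : 𝒯 => f t x) := by
    intro x
    exact ⟨0, by rintro _ ⟨t, rfl⟩; exact hf0 t x⟩
  have hm0 : ∀ x, 0 ≤ m x := fun x => le_ciInf fun t => hf0 t x
  have hmle : ∀ (x) (t : 𝒯), m x ≤ f t x := fun x t => ciInf_le (hbdd x) t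
  have hlip : ∀ x y, m x ≤ m y + dist x y := by
    intro x y
    have : m x - dist x y ≤ m y := by
      apply le_ciInf
      intro t
      have h1 : f t x ≤ f t y + dist x y := by
        apply Finset.sup'_le
        intro i hi
        exact le_trans Metric.infDist_le_infDist_add_dist
          (add_le_add_left (Finset.le_sup' (fun i => Metric.infDist y (C i)) hi) _)
      linarith [hmle x t]
    linarith
  have hmc : Continuous m := by
    have : LipschitzWith 1 m := by
      apply LipschitzWith.of_dist_le_mul
      intro x y
      rw [Real.dist_eq, abs_le]
      constructor
      · have h1 := hlip y x
        rw [dist_comm] at h1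
        push_cast
        linarith
      · have h1 := hlip x y
        push_cast
        linarith
    exact this.continuous
  set v : Set X → Set X := fun i => W i ∩ {x | Metric.infDist x (C i) < m x / 2} with hvdef
  have hvo : ∀ i, IsOpen (v i) := by
    intro i
    exact (hWo i).inter (isOpen_lt (Metric.continuous_infDist_pt (C i)) (hmc.div_const 2))
  -- positivity of m on S
  have hmpos : ∀ x ∈ S, 0 < m x := by
    intro x hx
    obtain ⟨N, hN, hNf⟩ := hWlf x (hc hx)
    obtain ⟨r, hr, hrN⟩ := Metric.mem_nhds_iff.mp hN
    have hfpos : ∀ t : 𝒯, 0 < f t x := by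
      intro t
      have : ¬ ((t : Finset (Set X)) : Set (Set X)) ⊆ {i | x ∈ closure (C i)} := by
        intro hsub
        have h1 : ((t : Finset (Set X)) : Set (Set X)).encard ≤ (n + 1 : ℕ) :=
          le_trans (Set.encard_mono hsub) (hclC x hx)
        rw [Set.encard_coe_eq_coe_finsetCard, t.2.1] at h1
        exact absurd (by exact_mod_cast h1) (by omega)
      obtain ⟨i, hit, hicl⟩ : ∃ i ∈ (t : Finset (Set X)), x ∉ closure (C i) := by
        by_contra hcon
        push_neg at hcon
        exact this fun i hi => hcon i hi
      have hCne : (C i).Nonempty := t.2.2 i hit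
      have : 0 < Metric.infDist x (C i) := by
        rcases lt_or_eq_of_le (Metric.infDist_nonneg (s := C i) (x := x)) with h | h
        · exact h
        · exact absurd ((Metric.mem_closure_iff_infDist_zero hCne).mpr h.symm) hicl
      exact lt_of_lt_of_le this (Finset.le_sup' (fun i => Metric.infDist x (C i)) hit)
    set G := {t : 𝒯 | f t x < r} with hGdef
    have hGfin : G.Finite := by
      have hKfin : {j | (W j ∩ N).Nonempty}.Finite := hNf
      have : ∀ t ∈ G, ((t : 𝒯) : Finset (Set X)) ∈ hKfin.toFinset.powerset := by
        rintro t ht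
        rw [Finset.mem_powerset]
        intro i hi
        have h1 : Metric.infDist x (C i) < r :=
          lt_of_le_of_lt (Finset.le_sup' (fun i => Metric.infDist x (C i)) hi) ht
        obtain ⟨y, hyC, hyd⟩ := (Metric.infDist_lt_iff (t.2.2 i hi)).mp h1
        refine hKfin.mem_toFinset.mpr ⟨y, hCW i hyC, hrN ?_⟩
        rw [Metric.mem_ball, dist_comm]; exact hyd
      apply Set.Finite.of_finite_image (f := fun t : 𝒯 => (t : Finset (Set X)))
      · apply (hKfin.toFinset.powerset.finite_toSet).subset
        rintro _ ⟨t, ht, rfl⟩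
        exact this t ht
      · exact fun a _ b _ h => Subtype.ext h
    rcases G.eq_empty_or_nonempty with hG | hG
    · have : ∀ t : 𝒯, r ≤ f t x := by
        intro t
        by_contra hcon
        exact (Set.eq_empty_iff_forall_notMem.mp hG t) (lt_of_not_ge hcon)
      exact lt_of_lt_of_le hr (le_ciInf this)
    · have hGne : hGfin.toFinset.Nonempty := by
        obtain ⟨t0, ht0⟩ := hG
        exact ⟨t0, hGfin.mem_toFinset.mpr ht0⟩
      set δ := (hGfin.toFinset.inf' hGne fun t => f t x) with hδdef
      have hδpos : 0 < δ := by
        obtain ⟨t0, ht0, heq⟩ := Finset.exists_mem_eq_inf' hGne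
          (fun t : 𝒯 => f t x)
        rw [hδdef, heq]
        exact hfpos t0
      have : ∀ t : 𝒯, min r δ ≤ f t x := by
        intro t
        by_cases ht : t ∈ G
        · exact le_trans (min_le_right _ _) (Finset.inf'_le _ (hGfin.mem_toFinset.mpr ht))
        · exact le_trans (min_le_left _ _) (le_of_not_gt ht)
      exact lt_of_lt_of_le (lt_min hr hδpos) (le_ciInf this)
  refine ⟨v '' J, ?_, ?_, ?_, ?_⟩
  · rintro V ⟨i, hi, rfl⟩; exact hvo i
  · intro x hx
    obtain ⟨i, hi⟩ := hcov x hx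
    refine ⟨v i, ⟨i, ⟨x, hi⟩, rfl⟩, hCW i hi, ?_⟩
    simp only [Set.mem_setOf_eq]
    rw [Metric.infDist_zero_of_mem hi]
    linarith [hmpos x hx]
  · rintro V ⟨i, hi, rfl⟩
    obtain ⟨U, hU, hWU⟩ := hWsub i (hi.mono (hCW i))
    exact ⟨U, hU, Set.inter_subset_left.trans hWU⟩
  · intro x hx
    have hsub : {V ∈ v '' J | x ∈ V} ⊆ v '' {i ∈ J | x ∈ v i} := by
      rintro V ⟨⟨i, hi, rfl⟩, hxV⟩
      exact ⟨i, ⟨hi, hxV⟩, rfl⟩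
    have hIcard : {i ∈ J | x ∈ v i}.encard ≤ (n + 1 : ℕ) := by
      by_contra hcon
      push_neg at hcon
      have h2 : (↑(n + 2) : ℕ∞) ≤ _ := Order.add_one_le_of_lt (by exact_mod_cast hcon)
      obtain ⟨t', ht'sub, ht'card⟩ := Set.exists_subset_encard_eq h2
      have ht'fin : t'.Finite := Set.finite_of_encard_eq_coe ht'card
      have htcard : ht'fin.toFinset.card = n + 2 := by
        have := ht'fin.encard_eq_coe_toFinset_card
        rw [ht'card] at this
        exact_mod_cast this.symm
      have ht𝒯 : ht'fin.toFinset ∈ 𝒯 := by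
        refine ⟨htcard, fun i hi => (ht'sub (ht'fin.mem_toFinset.mp hi)).1⟩
      set t : 𝒯 := ⟨ht'fin.toFinset, ht𝒯⟩ with htdef
      have hflt : f t x < m x / 2 := by
        apply (Finset.sup'_lt_iff (hne𝒯 t)).mpr
        intro i hi
        exact (ht'sub (ht'fin.mem_toFinset.mp hi)).2.2
      have := hmle x t
      have := hm0 x
      linarith
    calc {V ∈ v '' J | x ∈ V}.encard ≤ (v '' {i ∈ J | x ∈ v i}).encard :=
          Set.encard_mono hsub
      _ ≤ {i ∈ J | x ∈ v i}.encard := Set.encard_image_le _ _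
      _ ≤ (n + 1 : ℕ) := hIcard

/-- Open subsets: monotonicity. -/
theorem DimLE.open_subset {G : Set X} {n : ℕ} (h : DimLE (Set.univ : Set X) n)
    (hG : IsOpen G) : DimLE G n := by
  by_cases hGu : G = Set.univ
  · subst hGu; exact h
  have hGc : Gᶜ.Nonempty := Set.nonempty_compl.mpr hGu
  set T : ℕ → Set X := fun k => {x | (1 : ℝ) / (k + 1) ≤ Metric.infDist x Gᶜ} with hTdef
  have hTc : ∀ k, IsClosed (T k) :=
    fun k => isClosed_le continuous_const (Metric.continuous_infDist_pt Gᶜ)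
  have hTG : ∀ k, T k ⊆ G := by
    intro k x hx
    by_contra hxG
    have h0 : Metric.infDist x Gᶜ = 0 := Metric.infDist_zero_of_mem hxG
    have : (1 : ℝ) / (k + 1) ≤ 0 := h0 ▸ hx
    have : (0 : ℝ) < 1 / (k + 1) := by positivity
    linarith
  have hGT : G = ⋃ k, T k := by
    apply Set.Subset.antisymm
    · intro x hx
      have hpos : 0 < Metric.infDist x Gᶜ := by
        rcases lt_or_eq_of_le (Metric.infDist_nonneg (s := Gᶜ) (x := x)) with h' | h'
        · exact h'
        · exfalso
          have : x ∈ closure Gᶜ := (Metric.mem_closure_iff_infDist_zero hGc).mpr h'.symm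
          rw [hG.isClosed_compl.closure_eq] at this
          exact this hx
      obtain ⟨k, hk⟩ := exists_nat_one_div_lt hpos
      exact Set.mem_iUnion.mpr ⟨k, le_of_lt hk⟩
    · exact Set.iUnion_subset hTG
  rw [hGT]
  exact dimLE_iUnion_closed T hTc fun k => h.closed_subset (Set.subset_univ _) (hTc k)

/-- The main gluing theorem: a cover by open sets of dimension `≤ n` forces dimension `≤ n`. -/
theorem dimLE_univ_of_cover {n : ℕ} (𝒰 : Set (Set X)) (ho : ∀ U ∈ 𝒰, IsOpen U)
    (hc : Set.univ ⊆ ⋃₀ 𝒰) (h : ∀ U ∈ 𝒰, DimLE U n) :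
    DimLE (Set.univ : Set X) n := by
  classical
  -- refine to a cover whose closures sit inside members of 𝒰
  set 𝒰' : Set (Set X) := {V | IsOpen V ∧ ∃ U ∈ 𝒰, closure V ⊆ U} with h𝒰'def
  have ho' : ∀ V ∈ 𝒰', IsOpen V := fun V hV => hV.1
  have hc' : Set.univ ⊆ ⋃₀ 𝒰' := by
    intro x _
    obtain ⟨U, hU, hxU⟩ := hc (Set.mem_univ x)
    obtain ⟨r, hr, hball⟩ := Metric.isOpen_iff.mp (ho U hU) x hxU
    refine ⟨ball x (r / 2), ⟨isOpen_ball, U, hU, ?_⟩, mem_ball_self (by linarith)⟩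
    exact (Metric.closure_ball_subset_closedBall).trans
      ((Metric.closedBall_subset_ball (by linarith)).trans hball)
  obtain ⟨𝒱, hVo, hVc, hVsub, hVsep⟩ := stone_refinement 𝒰' ho'
  -- closures separation on each level
  have hsep' : ∀ k, ∃ ε : ℝ, 0 < ε ∧ ∀ V ∈ 𝒱 k, ∀ V' ∈ 𝒱 k, V ≠ V' →
      ∀ p ∈ closure V, ∀ q ∈ closure V', ε ≤ dist p q := by
    intro k
    obtain ⟨ε, hε, hsep⟩ := hVsep k
    refine ⟨ε, hε, ?_⟩
    intro V hV V' hV' hne p hp q hq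
    by_contra hlt
    push_neg at hlt
    set δ := (ε - dist p q) / 2 with hδ
    have hδpos : 0 < δ := by rw [hδ]; linarith
    obtain ⟨p', hp', hpp'⟩ := Metric.mem_closure_iff.mp hp δ hδpos
    obtain ⟨q', hq', hqq'⟩ := Metric.mem_closure_iff.mp hq δ hδpos
    have h1 : ε ≤ dist p' q' := hsep V hV V' hV' hne p' hp' q' hq'
    have h2 : dist p' q' ≤ dist p' p + dist p q + dist q q' := dist_triangle4 p' p q q'
    rw [dist_comm p' p] at h2
    have : dist p' q' < δ + dist p q + δ := by linarith
    rw [hδ] at this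
    linarith
  set T : ℕ → Set X := fun k => ⋃ V ∈ 𝒱 k, closure V with hTdef
  have hTclosed : ∀ k, IsClosed (T k) := by
    intro k
    obtain ⟨ε, hε, hsep⟩ := hsep' k
    rw [← isOpen_compl_iff]
    rw [Metric.isOpen_iff]
    intro x hx
    by_cases hmeet : ∃ V ∈ 𝒱 k, (closure V ∩ ball x (ε / 3)).Nonempty
    · obtain ⟨V₀, hV₀, y, hyV₀, hyb⟩ := hmeet
      have hxV₀ : x ∉ closure V₀ := fun hxV₀ =>
        hx (Set.mem_biUnion hV₀ hxV₀)
      obtain ⟨ρ, hρ, hρV₀⟩ := Metric.isOpen_iff.mp isClosed_closure.isOpen_compl x hxV₀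
      refine ⟨min (ε / 3) ρ, lt_min (by linarith) hρ, ?_⟩
      intro z hz
      intro hzT
      obtain ⟨V, hV, hzV⟩ := Set.mem_iUnion₂.mp hzT
      have hVV₀ : V = V₀ := by
        by_contra hne
        have h1 : ε ≤ dist z y := hsep V hV V₀ hV₀ hne z hzV y hyV₀
        have h2 : dist z x < ε / 3 := lt_of_lt_of_le (Metric.mem_ball.mp hz) (min_le_left _ _)
        have h3 : dist y x < ε / 3 := Metric.mem_ball.mp hyb
        have : dist z y ≤ dist z x + dist x y := dist_triangle z x y
        rw [dist_comm x y] at this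
        linarith
      subst hVV₀
      have : z ∈ ball x ρ := Metric.mem_ball.mp hz |> fun h' =>
        Metric.mem_ball.mpr (lt_of_lt_of_le h' (min_le_right _ _))
      exact hρV₀ this hzV
    · push_neg at hmeet
      refine ⟨ε / 3, by linarith, ?_⟩
      intro z hz hzT
      obtain ⟨V, hV, hzV⟩ := Set.mem_iUnion₂.mp hzT
      have h0 := hmeet V hV
      have hmem : z ∈ closure V ∩ ball x (ε / 3) := ⟨hzV, hz⟩
      rw [h0] at hmem
      exact hmem
  have hTdim : ∀ k, DimLE (T k) n := by
    intro k
    obtain ⟨ε, hε, hsep⟩ := hsep' k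
    have hT' : T k = ⋃ i : (𝒱 k), closure (i : Set X) := by
      rw [hTdef]; exact Set.biUnion_eq_iUnion _ _
    rw [hT']
    refine DimLE.iUnion_separated (O := fun i : (𝒱 k) => ⋃ q ∈ (i : Set X), ball q (ε / 3))
      (fun i => isOpen_biUnion fun q _ => isOpen_ball) ?_ ?_ ?_
    · rintro i p hp
      obtain ⟨q, hq, hpq⟩ := Metric.mem_closure_iff.mp hp (ε / 3) (by linarith)
      exact Set.mem_biUnion hq (Metric.mem_ball.mpr hpq)
    · rintro i j hne
      rw [Set.eq_empty_iff_forall_notMem]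
      rintro z ⟨hzi, hzj⟩
      obtain ⟨q, hq, hzq⟩ := Set.mem_iUnion₂.mp hzj
      have hVne : (i : Set X) ≠ (j : Set X) := fun h' => hne (Subtype.ext h')
      have h1 : ε ≤ dist z q := hsep _ i.2 _ j.2 hVne z hzi q (subset_closure hq)
      have h2 : dist z q < ε / 3 := Metric.mem_ball.mp hzq
      linarith
    · rintro i
      obtain ⟨W, hW, hiW⟩ := hVsub k i.1 i.2
      obtain ⟨hWopen, U, hU, hclWU⟩ := hW
      exact (h U hU).closed_subset ((closure_mono hiW).trans hclWU) isClosed_closure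
  have huniv : (Set.univ : Set X) = ⋃ k, T k := by
    apply Set.Subset.antisymm
    · intro x hx
      obtain ⟨k, hk⟩ := Set.mem_iUnion.mp (hVc (hc' hx))
      obtain ⟨V, hV, hxV⟩ := hk
      exact Set.mem_iUnion.mpr ⟨k, Set.mem_biUnion hV (subset_closure hxV)⟩
    · exact Set.subset_univ _
  rw [huniv]
  exact dimLE_iUnion_closed T hTclosed hTdim

end Metric

theorem coverDim_le_coe_iff {Y : Type*} [TopologicalSpace Y] {n : ℕ} :
    coverDim Y ≤ (n : ℕ∞) ↔ CoverDimLE Y n := by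
  constructor
  · intro hle
    set A := {k : ℕ | CoverDimLE Y k} with hA
    by_cases hAne : A.Nonempty
    · have hmem : sInf A ∈ A := Nat.sInf_mem hAne
      have hlow : (↑(sInf A) : ℕ∞) ≤ coverDim Y := by
        apply le_sInf
        rintro m ⟨k, rfl, hk⟩
        exact_mod_cast Nat.sInf_le hk
      have : (↑(sInf A) : ℕ∞) ≤ (n : ℕ∞) := hlow.trans hle
      exact CoverDimLE.mono hmem (by exact_mod_cast this)
    · exfalso
      have hempty : {m : ℕ∞ | ∃ k : ℕ, (k : ℕ∞) = m ∧ CoverDimLE Y k} = ∅ := by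
        rw [Set.eq_empty_iff_forall_notMem]
        rintro m ⟨k, rfl, hk⟩
        exact hAne ⟨k, hk⟩
      have : coverDim Y = ⊤ := by rw [coverDim, hempty, sInf_empty]
      rw [this] at hle
      exact absurd (lt_of_le_of_lt hle (WithTop.coe_lt_top n)) (lt_irrefl _)
  · intro hcd
    exact sInf_le ⟨n, rfl, hcd⟩

/-- For any open cover `𝒰` of a metric space `X`,
`dim X = sup_{U ∈ 𝒰} dim U`. -/
theorem stmt13 {X : Type*} [MetricSpace X] (𝒰 : Set (Set X))
    (hopen : ∀ U ∈ 𝒰, IsOpen U) (hcover : ⋃₀ 𝒰 = Set.univ) :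
    coverDim X = ⨆ U ∈ 𝒰, coverDim U := by
  apply le_antisymm
  · -- dim X ≤ sup
    set s := ⨆ U ∈ 𝒰, coverDim U with hs
    rcases eq_or_ne s ⊤ with hstop | hstop
    · rw [hstop]; exact le_top
    obtain ⟨nn, hnn⟩ := WithTop.ne_top_iff_exists.mp hstop
    have hUle : ∀ U ∈ 𝒰, CoverDimLE (↥U) nn := by
      intro U hU
      have h1 : coverDim (↥U) ≤ s := le_iSup₂ (f := fun (U : Set X) (_ : U ∈ 𝒰) => coverDim (↥U)) U hU
      rw [← hnn] at h1
      exact coverDim_le_coe_iff.mp h1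
    have hX : CoverDimLE X nn := by
      rw [coverDimLE_univ_iff]
      exact dimLE_univ_of_cover 𝒰 hopen hcover.symm.subset
        (fun U hU => coverDimLE_subtype_iff.mp (hUle U hU))
    calc coverDim X ≤ (nn : ℕ∞) := coverDim_le_coe_iff.mpr hX
      _ = s := hnn
  · -- sup ≤ dim X
    apply iSup₂_le
    intro U hU
    rcases eq_or_ne (coverDim X) ⊤ with hXtop | hXtop
    · rw [hXtop]; exact le_top
    obtain ⟨k, hk⟩ := WithTop.ne_top_iff_exists.mp hXtop
    have hXk : CoverDimLE X k := coverDim_le_coe_iff.mp (le_of_eq hk.symm)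
    have hUk : CoverDimLE (↥U) k := by
      rw [coverDimLE_subtype_iff]
      exact DimLE.open_subset (coverDimLE_univ_iff.mp hXk) (hopen U hU)
    calc coverDim U ≤ (k : ℕ∞) := coverDim_le_coe_iff.mpr hUk
      _ = coverDim X := hk
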